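/- If I₀ and I₁ are cancellable objects of a strict semi-monoidal 2-category C and i : I₀ → I₁ is an equi-arrow, then i, viewed as an object of the arrow 2-category C^2 (with its inherited tensor product), is cancellable: tensoring with i on either side is a fully faithful 2-functor on C^2. -/

import Mathlib

open CategoryTheory

universe w v u

section Two
variable {B : Type u} [Bicategory.{w, v} B] [Bicategory.Strict B]

open Bicategory

/-- A 1-cell admitting a pseudo-inverse. -/
def IsEquiArrow {a b : B} (f : a ⟶ b) : Prop :=
  ∃ g : b ⟶ a, Nonempty (f ≫ g ≅ 𝟙 a) ∧ Nonempty (g ≫ f ≅ 𝟙 b)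

/-- A strict (2-functorial, strictly associative) tensor product on a strict 2-category. -/
structure Tensor2 (B : Type u) [Bicategory.{w, v} B] [Bicategory.Strict B] where
  obj : B → B → B
  hom : ∀ {a b c d : B}, (a ⟶ b) → (c ⟶ d) → (obj a c ⟶ obj b d)
  cell : ∀ {a b c d : B} {f f' : a ⟶ b} {g g' : c ⟶ d},
    (f ⟶ f') → (g ⟶ g') → (hom f g ⟶ hom f' g')
  hom_id : ∀ (a c : B), hom (𝟙 a) (𝟙 c) = 𝟙 (obj a c)
  hom_comp : ∀ {a b c a' b' c' : B} (f : a ⟶ b) (g : b ⟶ c) (f' : a' ⟶ b') (g' : b' ⟶ c'),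
    hom (f ≫ g) (f' ≫ g') = hom f f' ≫ hom g g'
  cell_id : ∀ {a b c d : B} (f : a ⟶ b) (g : c ⟶ d), cell (𝟙 f) (𝟙 g) = 𝟙 (hom f g)
  cell_comp : ∀ {a b c d : B} {f f' f'' : a ⟶ b} {g g' g'' : c ⟶ d}
    (η : f ⟶ f') (η' : f' ⟶ f'') (θ : g ⟶ g') (θ' : g' ⟶ g''),
    cell (η ≫ η') (θ ≫ θ') = cell η θ ≫ cell η' θ'
  cell_whisker : ∀ {a b c a' b' c' : B} {f₁ f₂ : a ⟶ b} {g₁ g₂ : b ⟶ c}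
    {f₁' f₂' : a' ⟶ b'} {g₁' g₂' : b' ⟶ c'}
    (η : f₁ ⟶ f₂) (θ : g₁ ⟶ g₂) (η' : f₁' ⟶ f₂') (θ' : g₁' ⟶ g₂'),
    cell (η ▷ g₁ ≫ f₂ ◁ θ) (η' ▷ g₁' ≫ f₂' ◁ θ') =
      eqToHom (hom_comp f₁ g₁ f₁' g₁') ≫ (cell η η' ▷ hom g₁ g₁') ≫
        (hom f₂ f₂' ◁ cell θ θ') ≫ eqToHom (hom_comp f₂ g₂ f₂' g₂').symm
  assoc : ∀ (a b c : B), obj (obj a b) c = obj a (obj b c)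
  hom_assoc : ∀ {a a' b b' c c' : B} (f : a ⟶ a') (g : b ⟶ b') (k : c ⟶ c'),
    hom (hom f g) k ≫ eqToHom (assoc a' b' c') = eqToHom (assoc a b c) ≫ hom f (hom g k)

variable (T : Tensor2 B)

/-- The 2-functor "tensoring with `I` on the left", as a functor on hom-categories. -/
def lFun (I X Y : B) : (X ⟶ Y) ⥤ (T.obj I X ⟶ T.obj I Y) where
  obj f := T.hom (𝟙 I) f
  map η := T.cell (𝟙 (𝟙 I)) η
  map_id f := T.cell_id _ _
  map_comp {f g h} η θ := by
    have := T.cell_comp (𝟙 (𝟙 I)) (𝟙 (𝟙 I)) η θ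
    simpa using this

/-- The 2-functor "tensoring with `I` on the right", as a functor on hom-categories. -/
def rFun (I X Y : B) : (X ⟶ Y) ⥤ (T.obj X I ⟶ T.obj Y I) where
  obj f := T.hom f (𝟙 I)
  map η := T.cell η (𝟙 (𝟙 I))
  map_id f := T.cell_id _ _
  map_comp {f g h} η θ := by
    have := T.cell_comp η θ (𝟙 (𝟙 I)) (𝟙 (𝟙 I))
    simpa using this

/-- Cancellable object: tensoring with it on either side is fully faithful, i.e. induces
equivalences of hom-categories. -/
def Cancellable2 (I : B) : Prop :=
  (∀ X Y : B, (lFun T I X Y).IsEquivalence) ∧ (∀ X Y : B, (rFun T I X Y).IsEquivalence)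

/-- A unit object: a cancellable pseudo-idempotent. -/
def IsUnit2 (I : B) (α : T.obj I I ⟶ I) : Prop :=
  Cancellable2 T I ∧ IsEquiArrow α

end Two

open CategoryTheory Bicategory

section
variable {B : Type*} [Bicategory B] [Bicategory.Strict B] (T : Tensor2 B)

/-- Tensoring a square (a 1-cell of the arrow 2-category `C²`) on the left with an arrow
`i : I₀ ⟶ I₁`, viewed as an object of `C²`: the 2-cell component of the tensored square. -/
def tensorSqL {I₀ I₁ X₀ X₁ Y₀ Y₁ : B} (i : I₀ ⟶ I₁) (x : X₀ ⟶ X₁) (y : Y₀ ⟶ Y₁)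
    {f₀ : X₀ ⟶ Y₀} {f₁ : X₁ ⟶ Y₁} (F : f₀ ≫ y ⟶ x ≫ f₁) :
    T.hom (𝟙 I₀) f₀ ≫ T.hom i y ⟶ T.hom i x ≫ T.hom (𝟙 I₁) f₁ :=
  eqToHom (T.hom_comp (𝟙 I₀) i f₀ y).symm ≫
    T.cell (eqToHom (by rw [Category.id_comp, Category.comp_id] : 𝟙 I₀ ≫ i = i ≫ 𝟙 I₁)) F ≫
    eqToHom (T.hom_comp i (𝟙 I₁) x f₁)

/-- Tensoring a square on the right with an arrow `i : I₀ ⟶ I₁`. -/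
def tensorSqR {I₀ I₁ X₀ X₁ Y₀ Y₁ : B} (i : I₀ ⟶ I₁) (x : X₀ ⟶ X₁) (y : Y₀ ⟶ Y₁)
    {f₀ : X₀ ⟶ Y₀} {f₁ : X₁ ⟶ Y₁} (F : f₀ ≫ y ⟶ x ≫ f₁) :
    T.hom f₀ (𝟙 I₀) ≫ T.hom y i ⟶ T.hom x i ≫ T.hom f₁ (𝟙 I₁) :=
  eqToHom (T.hom_comp f₀ y (𝟙 I₀) i).symm ≫
    T.cell F (eqToHom (by rw [Category.id_comp, Category.comp_id] : 𝟙 I₀ ≫ i = i ≫ 𝟙 I₁)) ≫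
    eqToHom (T.hom_comp x f₁ i (𝟙 I₁))

end

namespace Tensor2

variable {B' : Type*} [Bicategory B'] [Bicategory.Strict B'] (T : Tensor2 B')

lemma cell_eqToHom {a b c d : B'} {u u' : a ⟶ b} {v v' : c ⟶ d} (h : u = u') (h' : v = v') :
    T.cell (eqToHom h) (eqToHom h') = eqToHom (by rw [h, h']) := by
  subst h; subst h'; simp [T.cell_id]

lemma cell_dec {a b c d : B'} {u u' : a ⟶ b} {v v' : c ⟶ d} (α : u ⟶ u') (β : v ⟶ v') :
    T.cell α β = T.cell α (𝟙 v) ≫ T.cell (𝟙 u') β := by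
  rw [← T.cell_comp]; simp

lemma cell_dec' {a b c d : B'} {u u' : a ⟶ b} {v v' : c ⟶ d} (α : u ⟶ u') (β : v ⟶ v') :
    T.cell α β = T.cell (𝟙 u) β ≫ T.cell α (𝟙 v') := by
  rw [← T.cell_comp]; simp

lemma cell_id_conj {a b c d : B'} {u u' : a ⟶ b} (h : u = u') {v v' : c ⟶ d} (β : v ⟶ v') :
    T.cell (𝟙 u) β = eqToHom (by rw [h]) ≫ T.cell (𝟙 u') β ≫ eqToHom (by rw [h]) := by
  subst h; simp

lemma cell_eqToHom_fst {a b c d : B'} {u u' : a ⟶ b} {v v' : c ⟶ d} (h : u = u') (β : v ⟶ v') :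
    T.cell (eqToHom h) β = T.cell (𝟙 u) β ≫ eqToHom (by rw [h]) := by
  subst h; simp

lemma cell_eqToHom_mid {a b c d : B'} {u u' : a ⟶ b} {v v' : c ⟶ d} (h : u = u') (β : v ⟶ v') :
    T.cell (eqToHom h) β = eqToHom (by rw [h]) ≫ T.cell (𝟙 u') β := by
  subst h; simp

lemma cell_id_whiskerLeft {a b c a' b' c' : B'} (u : a ⟶ b) (w : b ⟶ c)
    (f : a' ⟶ b') {g₁ g₂ : b' ⟶ c'} (θ : g₁ ⟶ g₂) :
    T.cell (𝟙 (u ≫ w)) (f ◁ θ) =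
      eqToHom (T.hom_comp u w f g₁) ≫ (T.hom u f ◁ T.cell (𝟙 w) θ) ≫
        eqToHom (T.hom_comp u w f g₂).symm := by
  simpa [T.cell_id] using T.cell_whisker (𝟙 u) (𝟙 w) (𝟙 f) θ

lemma cell_id_whiskerRight {a b c a' b' c' : B'} (u : a ⟶ b) (w : b ⟶ c)
    {f₁ f₂ : a' ⟶ b'} (η : f₁ ⟶ f₂) (g : b' ⟶ c') :
    T.cell (𝟙 (u ≫ w)) (η ▷ g) =
      eqToHom (T.hom_comp u w f₁ g) ≫ (T.cell (𝟙 u) η ▷ T.hom w g) ≫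
        eqToHom (T.hom_comp u w f₂ g).symm := by
  simpa [T.cell_id] using T.cell_whisker (𝟙 u) (𝟙 w) η (𝟙 g)

lemma cell_isIso {a b c d : B'} {u u' : a ⟶ b} {v v' : c ⟶ d}
    (α : u ⟶ u') (β : v ⟶ v') [IsIso α] [IsIso β] : IsIso (T.cell α β) := by
  refine ⟨T.cell (inv α) (inv β), ?_, ?_⟩ <;> rw [← T.cell_comp] <;> simp [T.cell_id]

/-- Iso version of `cell`. -/
def cellIso {a b c d : B'} {u u' : a ⟶ b} {v v' : c ⟶ d} (α : u ≅ u') (β : v ≅ v') :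
    T.hom u v ≅ T.hom u' v' where
  hom := T.cell α.hom β.hom
  inv := T.cell α.inv β.inv
  hom_inv_id := by rw [← T.cell_comp]; simp [T.cell_id]
  inv_hom_id := by rw [← T.cell_comp]; simp [T.cell_id]

end Tensor2

section Aux2
variable {B' : Type*} [Bicategory B'] [Bicategory.Strict B']

/-- Whiskering on the right with a 1-cell admitting a retraction up to iso is injective
on 2-cells. -/
lemma whiskerRight_cancel {A C Z : B'} (j : A ⟶ C) (j'' : C ⟶ A) (eps : j ≫ j'' ≅ 𝟙 A)
    {u v : Z ⟶ A} {α β : u ⟶ v} (h : α ▷ j = β ▷ j) : α = β := by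
  have h2 : α ▷ (j ≫ j'') = β ▷ (j ≫ j'') := by
    rw [Bicategory.whiskerRight_comp, Bicategory.whiskerRight_comp, h]
  have h3 : α ▷ (𝟙 A) = β ▷ (𝟙 A) := by
    have e1 := Bicategory.whisker_exchange α eps.hom
    have e2 := Bicategory.whisker_exchange β eps.hom
    have : u ◁ eps.hom ≫ α ▷ 𝟙 A = u ◁ eps.hom ≫ β ▷ 𝟙 A := by rw [e1, e2, h2]
    exact (cancel_epi _).mp this
  simp only [Bicategory.whiskerRight_id, Bicategory.Strict.rightUnitor_eqToIso,
    eqToIso.hom, eqToIso.inv] at h3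
  exact (cancel_mono _).mp ((cancel_epi _).mp h3)

namespace Tensor2
variable (T : Tensor2 B')

/-- The tensor product with the two slots swapped. -/
def swap : Tensor2 B' where
  obj a b := T.obj b a
  hom f g := T.hom g f
  cell α β := T.cell β α
  hom_id a c := T.hom_id c a
  hom_comp f g f' g' := T.hom_comp f' g' f g
  cell_id f g := T.cell_id g f
  cell_comp η η' θ θ' := T.cell_comp θ θ' η η'
  cell_whisker η θ η' θ' := T.cell_whisker η' θ' η θ
  assoc a b c := (T.assoc c b a).symm
  hom_assoc {a a' b b' c c'} f g k := by
    have h := T.hom_assoc k g f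
    calc T.hom k (T.hom g f) ≫ eqToHom (T.assoc c' b' a').symm
        = eqToHom (T.assoc c b a).symm ≫
            (T.hom (T.hom k g) f ≫ eqToHom (T.assoc c' b' a')) ≫
            eqToHom (T.assoc c' b' a').symm := by
          rw [h]; simp
      _ = eqToHom (T.assoc c b a).symm ≫ T.hom (T.hom k g) f := by simp

lemma tensorSqL_cell {I₀ I₁ X₀ X₁ Y₀ Y₁ : B'} (i : I₀ ⟶ I₁) (x : X₀ ⟶ X₁) (y : Y₀ ⟶ Y₁)
    {k₀ : X₀ ⟶ Y₀} {k₁ : X₁ ⟶ Y₁} (K : k₀ ≫ y ⟶ x ≫ k₁) :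
    tensorSqL T i x y K =
      eqToHom (by rw [← T.hom_comp, Category.id_comp] :
        T.hom (𝟙 I₀) k₀ ≫ T.hom i y = T.hom i (k₀ ≫ y)) ≫
      T.cell (𝟙 i) K ≫
      eqToHom (by rw [← T.hom_comp, Category.comp_id] :
        T.hom i (x ≫ k₁) = T.hom i x ≫ T.hom (𝟙 I₁) k₁) := by
  unfold tensorSqL
  rw [T.cell_eqToHom_mid (by rw [Category.id_comp, Category.comp_id] : 𝟙 I₀ ≫ i = i ≫ 𝟙 I₁) K,
    T.cell_id_conj (Category.comp_id i) K]
  simp [eqToHom_trans]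

end Tensor2
end Aux2

section Aux3
variable {B' : Type*} [Bicategory B'] [Bicategory.Strict B']

namespace Tensor2
variable (T : Tensor2 B') {I₀ I₁ : B'} (i : I₀ ⟶ I₁) (i' : I₁ ⟶ I₀)

/-- Auxiliary injection used to prove that tensoring with an equi-arrow is fully
faithful on hom-categories. -/
def Jmap (e₀ : i ≫ i' ≅ 𝟙 I₀) {X Y : B'} {f g : X ⟶ Y}
    (S : T.hom i f ⟶ T.hom i g) : T.hom (𝟙 I₀) f ⟶ T.hom (𝟙 I₀) g :=
  T.cell e₀.inv (eqToHom (Category.comp_id f).symm) ≫ eqToHom (T.hom_comp i i' f (𝟙 Y)) ≫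
    (S ▷ T.hom i' (𝟙 Y)) ≫ eqToHom (T.hom_comp i i' g (𝟙 Y)).symm ≫
    T.cell e₀.hom (eqToHom (Category.comp_id g))

lemma Jmap_cell (e₀ : i ≫ i' ≅ 𝟙 I₀) {X Y : B'} {f g : X ⟶ Y} (η : f ⟶ g) :
    T.Jmap i i' e₀ (T.cell (𝟙 i) η) = T.cell (𝟙 (𝟙 I₀)) η := by
  have hw := T.cell_id_whiskerRight i i' η (𝟙 Y)
  have hmid : (T.cell (𝟙 i) η ▷ T.hom i' (𝟙 Y)) =
      eqToHom (T.hom_comp i i' f (𝟙 Y)).symm ≫ T.cell (𝟙 (i ≫ i')) (η ▷ 𝟙 Y) ≫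
        eqToHom (T.hom_comp i i' g (𝟙 Y)) := by
    rw [hw]; simp
  rw [Jmap, hmid]
  simp only [eqToHom_trans, eqToHom_refl, Category.id_comp, Category.comp_id,
    eqToHom_trans_assoc, Category.assoc]
  rw [← T.cell_comp, ← T.cell_comp]
  congr 1
  · simp
  · have : (η ▷ 𝟙 Y) = eqToHom (Category.comp_id f) ≫ η ≫ eqToHom (Category.comp_id g).symm := by
      simp [Bicategory.whiskerRight_id, Bicategory.Strict.rightUnitor_eqToIso]
    rw [this]; simp

lemma Jmap_inj (e₀ : i ≫ i' ≅ 𝟙 I₀) (e₁ : i' ≫ i ≅ 𝟙 I₁) {X Y : B'} {f g : X ⟶ Y}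
    {S₁ S₂ : T.hom i f ⟶ T.hom i g} (h : T.Jmap i i' e₀ S₁ = T.Jmap i i' e₀ S₂) :
    S₁ = S₂ := by
  have hiso1 : IsIso (T.cell e₀.inv (eqToHom (Category.comp_id f).symm)) :=
    T.cell_isIso _ _
  have hiso2 : IsIso (T.cell e₀.hom (eqToHom (Category.comp_id g))) :=
    T.cell_isIso _ _
  rw [Jmap, Jmap] at h
  have h' : (S₁ ▷ T.hom i' (𝟙 Y)) = (S₂ ▷ T.hom i' (𝟙 Y)) := by
    have h2 := (cancel_epi _).mp ((cancel_epi _).mp h)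
    simp only [← Category.assoc] at h2
    exact (cancel_mono _).mp ((cancel_mono _).mp h2)
  refine whiskerRight_cancel (T.hom i' (𝟙 Y)) (T.hom i (𝟙 Y)) ?_ h'
  exact (eqToIso (T.hom_comp i' i (𝟙 Y) (𝟙 Y)).symm) ≪≫
    T.cellIso e₁ (eqToIso (Category.comp_id (𝟙 Y))) ≪≫ eqToIso (T.hom_id I₁ Y)

lemma phi_faithful (e₀ : i ≫ i' ≅ 𝟙 I₀) {X Y : B'}
    (hE : (lFun T I₀ X Y).IsEquivalence) {f g : X ⟶ Y} {η θ : f ⟶ g}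
    (h : T.cell (𝟙 i) η = T.cell (𝟙 i) θ) : η = θ := by
  haveI := hE
  apply (lFun T I₀ X Y).map_injective
  show T.cell (𝟙 (𝟙 I₀)) η = T.cell (𝟙 (𝟙 I₀)) θ
  rw [← T.Jmap_cell i i' e₀ η, ← T.Jmap_cell i i' e₀ θ, h]

lemma phi_full (e₀ : i ≫ i' ≅ 𝟙 I₀) (e₁ : i' ≫ i ≅ 𝟙 I₁) {X Y : B'}
    (hE : (lFun T I₀ X Y).IsEquivalence) {f g : X ⟶ Y}
    (S : T.hom i f ⟶ T.hom i g) : ∃ η : f ⟶ g, T.cell (𝟙 i) η = S := by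
  haveI := hE
  refine ⟨(lFun T I₀ X Y).preimage (T.Jmap i i' e₀ S), ?_⟩
  apply T.Jmap_inj i i' e₀ e₁
  rw [T.Jmap_cell]
  exact (lFun T I₀ X Y).map_preimage (T.Jmap i i' e₀ S)

end Tensor2
end Aux3

section LeftCase
variable {B' : Type*} [Bicategory B'] [Bicategory.Strict B']

theorem Tensor2.leftCase (T : Tensor2 B') {I₀ I₁ : B'} (i : I₀ ⟶ I₁)
    (hI₀ : Cancellable2 T I₀) (hI₁ : Cancellable2 T I₁) (hi : IsEquiArrow i)
    {X₀ X₁ Y₀ Y₁ : B'} (x : X₀ ⟶ X₁) (y : Y₀ ⟶ Y₁) :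
    ((∀ (s₀ : T.obj I₀ X₀ ⟶ T.obj I₀ Y₀) (s₁ : T.obj I₁ X₁ ⟶ T.obj I₁ Y₁)
        (S : s₀ ≫ T.hom i y ⟶ T.hom i x ≫ s₁),
        ∃ (k₀ : X₀ ⟶ Y₀) (k₁ : X₁ ⟶ Y₁) (K : k₀ ≫ y ⟶ x ≫ k₁)
          (m₀ : s₀ ≅ T.hom (𝟙 I₀) k₀) (m₁ : s₁ ≅ T.hom (𝟙 I₁) k₁),
          S ≫ (T.hom i x ◁ m₁.hom) = (m₀.hom ▷ T.hom i y) ≫ tensorSqL T i x y K) ∧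
     (∀ (p₀ q₀ : X₀ ⟶ Y₀) (p₁ q₁ : X₁ ⟶ Y₁)
        (P : p₀ ≫ y ⟶ x ≫ p₁) (Q : q₀ ≫ y ⟶ x ≫ q₁)
        (n₀ : T.hom (𝟙 I₀) p₀ ⟶ T.hom (𝟙 I₀) q₀)
        (n₁ : T.hom (𝟙 I₁) p₁ ⟶ T.hom (𝟙 I₁) q₁),
        tensorSqL T i x y P ≫ (T.hom i x ◁ n₁) = (n₀ ▷ T.hom i y) ≫ tensorSqL T i x y Q →
        ∃! m : (p₀ ⟶ q₀) × (p₁ ⟶ q₁),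
          (P ≫ (x ◁ m.2) = (m.1 ▷ y) ≫ Q) ∧
          T.cell (𝟙 (𝟙 I₀)) m.1 = n₀ ∧ T.cell (𝟙 (𝟙 I₁)) m.2 = n₁)) := by
  obtain ⟨i', ⟨e₀⟩, ⟨e₁⟩⟩ := hi
  constructor
  · -- essential surjectivity
    intro s₀ s₁ S
    haveI := hI₀.1 X₀ Y₀
    haveI := hI₁.1 X₁ Y₁
    set F₀ := lFun T I₀ X₀ Y₀ with hF₀
    set F₁ := lFun T I₁ X₁ Y₁ with hF₁
    let k₀ := F₀.objPreimage s₀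
    let k₁ := F₁.objPreimage s₁
    have m₀ : s₀ ≅ T.hom (𝟙 I₀) k₀ := (F₀.objObjPreimageIso s₀).symm
    have m₁ : s₁ ≅ T.hom (𝟙 I₁) k₁ := (F₁.objObjPreimageIso s₁).symm
    have hA : T.hom (𝟙 I₀) k₀ ≫ T.hom i y = T.hom i (k₀ ≫ y) := by
      rw [← T.hom_comp, Category.id_comp]
    have hB : T.hom i (x ≫ k₁) = T.hom i x ≫ T.hom (𝟙 I₁) k₁ := by
      rw [← T.hom_comp, Category.comp_id]
    obtain ⟨K, hK⟩ := T.phi_full i i' e₀ e₁ (hI₀.1 X₀ Y₁)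
      (eqToHom hA.symm ≫ (m₀.inv ▷ T.hom i y) ≫ S ≫ (T.hom i x ◁ m₁.hom) ≫ eqToHom hB.symm)
    refine ⟨k₀, k₁, K, m₀, m₁, ?_⟩
    have hT : tensorSqL T i x y K =
        (m₀.inv ▷ T.hom i y) ≫ S ≫ (T.hom i x ◁ m₁.hom) := by
      rw [T.tensorSqL_cell, hK]
      simp
    rw [hT]
    rw [← Category.assoc, ← Bicategory.comp_whiskerRight, m₀.hom_inv_id]
    simp
  · -- full faithfulness on cylinders
    intro p₀ q₀ p₁ q₁ P Q n₀ n₁ hcomp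
    haveI := hI₀.1 X₀ Y₀
    haveI := hI₁.1 X₁ Y₁
    set F₀ := lFun T I₀ X₀ Y₀ with hF₀
    set F₁ := lFun T I₁ X₁ Y₁ with hF₁
    set a₀ := F₀.preimage n₀ with ha₀def
    set a₁ := F₁.preimage n₁ with ha₁def
    have ha₀ : T.cell (𝟙 (𝟙 I₀)) a₀ = n₀ := F₀.map_preimage n₀
    have ha₁ : T.cell (𝟙 (𝟙 I₁)) a₁ = n₁ := F₁.map_preimage n₁
    have hA : T.hom i (p₀ ≫ y) = T.hom (𝟙 I₀) p₀ ≫ T.hom i y := by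
      rw [← T.hom_comp, Category.id_comp]
    have hBP : T.hom i x ≫ T.hom (𝟙 I₁) p₁ = T.hom i (x ≫ p₁) := by
      rw [← T.hom_comp, Category.comp_id]
    have hC : T.hom i x ≫ T.hom (𝟙 I₁) q₁ = T.hom i (x ≫ q₁) := by
      rw [← T.hom_comp, Category.comp_id]
    have hW : T.hom (𝟙 I₀) q₀ ≫ T.hom i y = T.hom i (q₀ ≫ y) := by
      rw [← T.hom_comp, Category.id_comp]
    have key : P ≫ (x ◁ a₁) = (a₀ ▷ y) ≫ Q := by
      apply T.phi_faithful i i' e₀ (hI₀.1 X₀ Y₁)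
      have dL : T.cell (𝟙 i) (P ≫ x ◁ a₁) = T.cell (𝟙 i) P ≫ T.cell (𝟙 i) (x ◁ a₁) := by
        simpa using T.cell_comp (𝟙 i) (𝟙 i) P (x ◁ a₁)
      have dR : T.cell (𝟙 i) ((a₀ ▷ y) ≫ Q) = T.cell (𝟙 i) (a₀ ▷ y) ≫ T.cell (𝟙 i) Q := by
        simpa using T.cell_comp (𝟙 i) (𝟙 i) (a₀ ▷ y) Q
      have s1 : T.cell (𝟙 i) P = eqToHom hA ≫ tensorSqL T i x y P ≫ eqToHom hBP := by
        rw [T.tensorSqL_cell]; simp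
      have s4 : T.cell (𝟙 i) Q = eqToHom hW.symm ≫ tensorSqL T i x y Q ≫ eqToHom hC := by
        rw [T.tensorSqL_cell]; simp
      have s2 : T.cell (𝟙 i) (x ◁ a₁) =
          eqToHom hBP.symm ≫ (T.hom i x ◁ n₁) ≫ eqToHom hC := by
        rw [T.cell_id_conj (Category.comp_id i).symm (x ◁ a₁),
          T.cell_id_whiskerLeft i (𝟙 I₁) x a₁, ha₁]
        simp [eqToHom_trans]
      have s3 : T.cell (𝟙 i) (a₀ ▷ y) =
          eqToHom hA ≫ (n₀ ▷ T.hom i y) ≫ eqToHom hW := by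
        rw [T.cell_id_conj (Category.id_comp i).symm (a₀ ▷ y),
          T.cell_id_whiskerRight (𝟙 I₀) i a₀ y, ha₀]
        simp [eqToHom_trans]
      rw [dL, dR, s1, s2, s3, s4]
      simp only [Category.assoc, eqToHom_trans_assoc, eqToHom_trans, eqToHom_refl,
        Category.id_comp]
      congr 1
      simp only [← Category.assoc]
      rw [hcomp]
    refine ⟨⟨a₀, a₁⟩, ⟨key, ha₀, ha₁⟩, ?_⟩
    rintro ⟨b₀, b₁⟩ ⟨-, hb₀, hb₁⟩
    have h1 : b₀ = a₀ := F₀.map_injective (hb₀.trans ha₀.symm)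
    have h2 : b₁ = a₁ := F₁.map_injective (hb₁.trans ha₁.symm)
    simp [h1, h2]

end LeftCase

section
variable {B : Type*} [Bicategory B] [Bicategory.Strict B] (T : Tensor2 B)

/-- If `I₀` and `I₁` are cancellable objects of a strict semi-monoidal 2-category `C` and
`i : I₀ ⟶ I₁` is an equi-arrow, then `i`, viewed as an object of the arrow 2-category `C²`
(with its inherited tensor product), is cancellable: tensoring with `i` on either side is a
fully faithful 2-functor on `C²` (essentially surjective and bijective on cylinders, on each
hom-category of squares). -/
theorem arrow_of_cancellables_is_cancellable
    {I₀ I₁ : B} (i : I₀ ⟶ I₁)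
    (hI₀ : Cancellable2 T I₀) (hI₁ : Cancellable2 T I₁) (hi : IsEquiArrow i) :
    ∀ {X₀ X₁ Y₀ Y₁ : B} (x : X₀ ⟶ X₁) (y : Y₀ ⟶ Y₁),
      -- tensoring on the left is essentially surjective on hom-categories of squares
      ((∀ (s₀ : T.obj I₀ X₀ ⟶ T.obj I₀ Y₀) (s₁ : T.obj I₁ X₁ ⟶ T.obj I₁ Y₁)
          (S : s₀ ≫ T.hom i y ⟶ T.hom i x ≫ s₁),
          ∃ (k₀ : X₀ ⟶ Y₀) (k₁ : X₁ ⟶ Y₁) (K : k₀ ≫ y ⟶ x ≫ k₁)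
            (m₀ : s₀ ≅ T.hom (𝟙 I₀) k₀) (m₁ : s₁ ≅ T.hom (𝟙 I₁) k₁),
            S ≫ (T.hom i x ◁ m₁.hom) = (m₀.hom ▷ T.hom i y) ≫ tensorSqL T i x y K) ∧
      -- and fully faithful on cylinders
       (∀ (p₀ q₀ : X₀ ⟶ Y₀) (p₁ q₁ : X₁ ⟶ Y₁)
          (P : p₀ ≫ y ⟶ x ≫ p₁) (Q : q₀ ≫ y ⟶ x ≫ q₁)
          (n₀ : T.hom (𝟙 I₀) p₀ ⟶ T.hom (𝟙 I₀) q₀)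
          (n₁ : T.hom (𝟙 I₁) p₁ ⟶ T.hom (𝟙 I₁) q₁),
          tensorSqL T i x y P ≫ (T.hom i x ◁ n₁) = (n₀ ▷ T.hom i y) ≫ tensorSqL T i x y Q →
          ∃! m : (p₀ ⟶ q₀) × (p₁ ⟶ q₁),
            (P ≫ (x ◁ m.2) = (m.1 ▷ y) ≫ Q) ∧
            T.cell (𝟙 (𝟙 I₀)) m.1 = n₀ ∧ T.cell (𝟙 (𝟙 I₁)) m.2 = n₁)) ∧
      -- tensoring on the right is essentially surjective on hom-categories of squares
      ((∀ (s₀ : T.obj X₀ I₀ ⟶ T.obj Y₀ I₀) (s₁ : T.obj X₁ I₁ ⟶ T.obj Y₁ I₁)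
          (S : s₀ ≫ T.hom y i ⟶ T.hom x i ≫ s₁),
          ∃ (k₀ : X₀ ⟶ Y₀) (k₁ : X₁ ⟶ Y₁) (K : k₀ ≫ y ⟶ x ≫ k₁)
            (m₀ : s₀ ≅ T.hom k₀ (𝟙 I₀)) (m₁ : s₁ ≅ T.hom k₁ (𝟙 I₁)),
            S ≫ (T.hom x i ◁ m₁.hom) = (m₀.hom ▷ T.hom y i) ≫ tensorSqR T i x y K) ∧
      -- and fully faithful on cylinders
       (∀ (p₀ q₀ : X₀ ⟶ Y₀) (p₁ q₁ : X₁ ⟶ Y₁)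
          (P : p₀ ≫ y ⟶ x ≫ p₁) (Q : q₀ ≫ y ⟶ x ≫ q₁)
          (n₀ : T.hom p₀ (𝟙 I₀) ⟶ T.hom q₀ (𝟙 I₀))
          (n₁ : T.hom p₁ (𝟙 I₁) ⟶ T.hom q₁ (𝟙 I₁)),
          tensorSqR T i x y P ≫ (T.hom x i ◁ n₁) = (n₀ ▷ T.hom y i) ≫ tensorSqR T i x y Q →
          ∃! m : (p₀ ⟶ q₀) × (p₁ ⟶ q₁),
            (P ≫ (x ◁ m.2) = (m.1 ▷ y) ≫ Q) ∧
            T.cell m.1 (𝟙 (𝟙 I₀)) = n₀ ∧ T.cell m.2 (𝟙 (𝟙 I₁)) = n₁)) := by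
  intro X₀ X₁ Y₀ Y₁ x y
  refine ⟨T.leftCase i hI₀ hI₁ hi x y, ?_⟩
  exact T.swap.leftCase i ⟨hI₀.2, hI₀.1⟩ ⟨hI₁.2, hI₁.1⟩ hi x y

end
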